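/- arXiv:2411.06201 — 2 statements merged into one kernel-verified Lean document; each statement's English description precedes it below -/
import Mathlib

section
/- Define $r_0 = 1$, $r_{n+1} = r_n^2 + 1$, and $s_n = (2 r_{n+1} - 1)/(2 r_{n+1})$ for $n \geq 0$. Then the infinite product $\prod_{n=0}^{\infty} s_n$ converges to a value strictly greater than $1/2$. -/
open Filter

theorem stmt5 (r : ℕ → ℝ) (h0 : r 0 = 1) (hrec : ∀ n, r (n + 1) = r n ^ 2 + 1)
    (s : ℕ → ℝ) (hs : ∀ n, s n = (2 * r (n + 1) - 1) / (2 * r (n + 1))) :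
    ∃ l : ℝ, 1 / 2 < l ∧
      Tendsto (fun N => ∏ n ∈ Finset.range N, s n) atTop (nhds l) := by
  have hr1 : ∀ n, 1 ≤ r n := by
    intro n
    induction n with
    | zero => rw [h0]
    | succ n ih => rw [hrec]; nlinarith
  have hspos : ∀ n, 0 < s n := by
    intro n
    rw [hs]
    have := hr1 (n + 1)
    apply div_pos <;> linarith
  have hsle : ∀ n, s n ≤ 1 := by
    intro n
    rw [hs, div_le_one (by have := hr1 (n + 1); linarith)]
    linarith
  have hgrow : ∀ n, (5 : ℝ) ^ (n + 1) ≤ r (n + 2) := by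
    intro n
    induction n with
    | zero =>
      rw [show (2 : ℕ) = 1 + 1 from rfl, hrec, hrec, h0]; norm_num
    | succ n ih =>
      rw [show n + 1 + 2 = (n + 2) + 1 from rfl, hrec]
      have h5 : (0 : ℝ) < 5 ^ (n + 1) := by positivity
      have h55 : (5 : ℝ) ≤ 5 ^ (n + 1) := le_self_pow₀ (by norm_num) (by omega)
      have hr5 : (5 : ℝ) ≤ r (n + 2) := le_trans h55 ih
      have hmul : (5 : ℝ) ^ (n + 1) * 5 ≤ r (n + 2) * r (n + 2) :=
        mul_le_mul ih hr5 (by norm_num) (by linarith)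
      have h5e : (5 : ℝ) ^ (n + 1 + 1) = 5 ^ (n + 1) * 5 := by ring
      nlinarith [hmul]
  have hsge : ∀ n, 1 - (1 / 2) * (1 / 5 : ℝ) ^ (n + 1) ≤ s (n + 1) := by
    intro n
    have hr := hr1 (n + 2)
    have hg := hgrow n
    have h5 : (0 : ℝ) < 5 ^ (n + 1) := by positivity
    rw [hs]
    have hpos : (0 : ℝ) < 2 * r (n + 1 + 1) := by linarith
    rw [show (2 * r (n + 1 + 1) - 1) / (2 * r (n + 1 + 1))
        = 1 - 1 / (2 * r (n + 1 + 1)) by field_simp]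
    have h1 : 1 / (2 * r (n + 1 + 1)) ≤ 1 / (2 * 5 ^ (n + 1)) := by
      apply one_div_le_one_div_of_le (by positivity)
      linarith
    have h2 : 1 / (2 * (5 : ℝ) ^ (n + 1)) = (1 / 2) * (1 / 5) ^ (n + 1) := by
      rw [one_div_pow]
      ring
    linarith [h1, h2 ▸ h1]
  have hprodnn : ∀ N, 0 ≤ ∏ n ∈ Finset.range N, s n := by
    intro N
    exact Finset.prod_nonneg fun n _ => (hspos n).le
  have key : ∀ N, (5 : ℝ) / 8 + (1 / 8) * (1 / 5) ^ N ≤ ∏ n ∈ Finset.range (N + 1), s n := by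
    intro N
    induction N with
    | zero =>
      rw [Finset.prod_range_one, hs, hrec, h0]
      norm_num
    | succ N ih =>
      rw [Finset.prod_range_succ]
      have hx : (0 : ℝ) < (1 / 5 : ℝ) ^ (N + 1) := by positivity
      have hx5 : ((1 / 5 : ℝ)) ^ (N + 1) ≤ 1 / 5 := by
        calc ((1 / 5 : ℝ)) ^ (N + 1) ≤ (1 / 5 : ℝ) ^ 1 :=
          pow_le_pow_of_le_one (by norm_num) (by norm_num) (by omega)
        _ = 1 / 5 := pow_one _
      have hB : (0 : ℝ) ≤ 1 - (1 / 2) * (1 / 5 : ℝ) ^ (N + 1) := by nlinarith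
      have := mul_le_mul ih (hsge N) hB (hprodnn (N + 1))
      have hxeq : ((1 / 5 : ℝ)) ^ (N + 1) = (1 / 5) * (1 / 5) ^ N := by ring
      nlinarith [this, hx, hx5]
  have hlb : ∀ N, (5 : ℝ) / 8 ≤ ∏ n ∈ Finset.range N, s n := by
    intro N
    cases N with
    | zero =>
      rw [Finset.prod_range_zero]
      norm_num
    | succ N =>
      have := key N
      have : (0 : ℝ) < (1 / 8) * (1 / 5 : ℝ) ^ N := by positivity
      linarith [key N]
  have hanti : Antitone (fun N => ∏ n ∈ Finset.range N, s n) := by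
    apply antitone_nat_of_succ_le
    intro N
    rw [Finset.prod_range_succ]
    nlinarith [hprodnn N, hsle N, hspos N]
  have hbdd : BddBelow (Set.range (fun N => ∏ n ∈ Finset.range N, s n)) := by
    refine ⟨5 / 8, ?_⟩
    rintro x ⟨N, rfl⟩
    exact hlb N
  refine ⟨⨅ N, ∏ n ∈ Finset.range N, s n, ?_, tendsto_atTop_ciInf hanti hbdd⟩
  have : (5 : ℝ) / 8 ≤ ⨅ N, ∏ n ∈ Finset.range N, s n := le_ciInf hlb
  linarith
end

section
/- Dobrushin's ergodic coefficient is submultiplicative: for column-stochastic matrices $Q_1 \in [0,1]^{B \times C}$ and $Q_2 \in [0,1]^{C \times D}$ (finite index sets), $\delta(Q_1 Q_2) \leq \delta(Q_1)\,\delta(Q_2)$. -/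
/-- Dobrushin's ergodic coefficient: maximal total variation distance between columns. -/
noncomputable def dobrushin {B C : Type*} [Fintype B] [Fintype C] (Q : Matrix B C ℝ) : ℝ :=
  ⨆ i : C, ⨆ j : C, (1 / 2) * ∑ k : B, |Q k i - Q k j|

/-- A matrix is column stochastic if all its columns are probability vectors. -/
def ColStochastic {B C : Type*} [Fintype B] (Q : Matrix B C ℝ) : Prop :=
  (∀ b c, 0 ≤ Q b c) ∧ ∀ c, ∑ b, Q b c = 1

lemma le_dobrushin {B C : Type*} [Fintype B] [Fintype C] (Q : Matrix B C ℝ) (i j : C) :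
    (1 / 2) * ∑ k : B, |Q k i - Q k j| ≤ dobrushin Q := by
  refine le_ciSup_of_le (Finite.bddAbove_range _) i ?_
  exact le_ciSup (f := fun j => (1 / 2) * ∑ k : B, |Q k i - Q k j|) (Finite.bddAbove_range _) j

lemma dobrushin_nonneg {B C : Type*} [Fintype B] [Fintype C] [Nonempty C] (Q : Matrix B C ℝ) :
    0 ≤ dobrushin Q := by
  obtain ⟨i⟩ := (inferInstance : Nonempty C)
  refine le_trans ?_ (le_dobrushin Q i i)
  positivity

lemma dobrushin_le {B C : Type*} [Fintype B] [Fintype C] [Nonempty C] (Q : Matrix B C ℝ) (x : ℝ)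
    (h : ∀ i j, (1 / 2) * ∑ k : B, |Q k i - Q k j| ≤ x) : dobrushin Q ≤ x :=
  ciSup_le fun i => ciSup_le fun j => h i j

lemma key_contraction {B C : Type*} [Fintype B] [Fintype C] (Q : Matrix B C ℝ)
    (v : C → ℝ) (hv : ∑ c, v c = 0) (Dd : ℝ)
    (hD : ∀ c d, (1 / 2) * ∑ k : B, |Q k c - Q k d| ≤ Dd) :
    (1 / 2) * ∑ k : B, |∑ c, Q k c * v c| ≤ Dd * ((1 / 2) * ∑ c, |v c|) := by
  set p : C → ℝ := fun c => max (v c) 0 with hp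
  set n : C → ℝ := fun c => max (-v c) 0 with hn
  have hpn : ∀ c, v c = p c - n c := fun c => (max_zero_sub_max_neg_zero_eq_self (v c)).symm
  have habs : ∀ c, |v c| = p c + n c := fun c => (max_zero_add_max_neg_zero_eq_abs_self (v c)).symm
  have hp0 : ∀ c, 0 ≤ p c := fun c => le_max_right _ _
  have hn0 : ∀ c, 0 ≤ n c := fun c => le_max_right _ _
  set s : ℝ := ∑ c, p c with hs
  have hsn : ∑ c, n c = s := by
    have h2 : ∑ c, (p c - n c) = 0 := by
      rw [← hv]; exact (Finset.sum_congr rfl (fun c _ => (hpn c).symm))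
    rw [Finset.sum_sub_distrib] at h2
    linarith
  have hsabs : ∑ c, |v c| = 2 * s := by
    rw [Finset.sum_congr rfl (fun c _ => habs c), Finset.sum_add_distrib, hsn]; ring
  have hs0 : 0 ≤ s := Finset.sum_nonneg fun c _ => hp0 c
  rcases eq_or_lt_of_le hs0 with hse | hsp
  · -- s = 0 : v = 0
    have hpz : ∀ c ∈ Finset.univ, p c = 0 :=
      (Finset.sum_eq_zero_iff_of_nonneg (fun c _ => hp0 c)).mp hse.symm
    have hnz : ∀ c ∈ Finset.univ, n c = 0 := by
      rw [← hse] at hsn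
      exact (Finset.sum_eq_zero_iff_of_nonneg (fun c _ => hn0 c)).mp hsn
    have hvz : ∀ c, v c = 0 := fun c => by
      rw [hpn c, hpz c (Finset.mem_univ c), hnz c (Finset.mem_univ c)]; ring
    simp [hvz]
  · -- main case
    have key_id : ∀ k : B, (∑ c, Q k c * v c) * s
        = ∑ c, ∑ d, p c * n d * (Q k c - Q k d) := by
      intro k
      have h1 : ∑ c, Q k c * v c = (∑ c, Q k c * p c) - (∑ c, Q k c * n c) := by
        rw [← Finset.sum_sub_distrib]
        exact Finset.sum_congr rfl fun c _ => by rw [hpn c]; ring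
      have h2 : (∑ c, Q k c * p c) * (∑ d, n d) = ∑ c, ∑ d, Q k c * p c * n d :=
        Finset.sum_mul_sum _ _ _ _
      have h3 : (∑ c, Q k c * n c) * (∑ d, p d) = ∑ c, ∑ d, Q k c * n c * p d :=
        Finset.sum_mul_sum _ _ _ _
      have h4 : ∑ c, ∑ d, Q k c * n c * p d = ∑ d, ∑ c, Q k c * n c * p d :=
        Finset.sum_comm
      calc (∑ c, Q k c * v c) * s
          = (∑ c, Q k c * p c) * (∑ d, n d) - (∑ c, Q k c * n c) * (∑ d, p d) := by
            rw [h1, hsn, ← hs]; ring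
        _ = (∑ c, ∑ d, Q k c * p c * n d) - (∑ d, ∑ c, Q k c * n c * p d) := by
            rw [h2, h3, h4]
        _ = ∑ c, ∑ d, p c * n d * (Q k c - Q k d) := by
            rw [← Finset.sum_sub_distrib]
            refine Finset.sum_congr rfl fun c _ => ?_
            rw [← Finset.sum_sub_distrib]
            exact Finset.sum_congr rfl fun d _ => by ring
    have bound : ∀ k : B, |∑ c, Q k c * v c| * s ≤ ∑ c, ∑ d, p c * n d * |Q k c - Q k d| := by
      intro k
      rw [← abs_of_nonneg hs0, ← abs_mul, key_id k]
      refine (Finset.abs_sum_le_sum_abs _ _).trans ?_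
      refine Finset.sum_le_sum fun c _ => ?_
      refine (Finset.abs_sum_le_sum_abs _ _).trans ?_
      refine Finset.sum_le_sum fun d _ => ?_
      rw [abs_mul, abs_of_nonneg (mul_nonneg (hp0 c) (hn0 d))]
    have total : (∑ k : B, |∑ c, Q k c * v c|) * s ≤ 2 * Dd * (s * s) := by
      calc (∑ k : B, |∑ c, Q k c * v c|) * s = ∑ k : B, |∑ c, Q k c * v c| * s :=
            Finset.sum_mul ..
        _ ≤ ∑ k : B, ∑ c, ∑ d, p c * n d * |Q k c - Q k d| :=
            Finset.sum_le_sum fun k _ => bound k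
        _ = ∑ c, ∑ d, ∑ k : B, p c * n d * |Q k c - Q k d| := by
            rw [Finset.sum_comm]
            exact Finset.sum_congr rfl fun c _ => Finset.sum_comm
        _ = ∑ c, ∑ d, p c * n d * ∑ k : B, |Q k c - Q k d| := by
            refine Finset.sum_congr rfl fun c _ => Finset.sum_congr rfl fun d _ => ?_
            rw [Finset.mul_sum]
        _ ≤ ∑ c, ∑ d, p c * n d * (2 * Dd) := by
            refine Finset.sum_le_sum fun c _ => Finset.sum_le_sum fun d _ => ?_
            refine mul_le_mul_of_nonneg_left ?_ (mul_nonneg (hp0 c) (hn0 d))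
            have := hD c d
            linarith
        _ = 2 * Dd * (s * s) := by
            simp_rw [← Finset.sum_mul, ← Finset.sum_mul_sum]
            rw [hsn, ← hs]; ring
    have : ((1 / 2) * ∑ k : B, |∑ c, Q k c * v c|) * s ≤ (Dd * ((1 / 2) * ∑ c, |v c|)) * s := by
      rw [hsabs]
      nlinarith [total]
    exact le_of_mul_le_mul_right this hsp

theorem stmt6 {B C D : Type*} [Fintype B] [Fintype C] [Fintype D] [Nonempty C] [Nonempty D]
    (Q1 : Matrix B C ℝ) (Q2 : Matrix C D ℝ)
    (h1 : ColStochastic Q1) (h2 : ColStochastic Q2) :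
    dobrushin (Q1 * Q2) ≤ dobrushin Q1 * dobrushin Q2 := by
  refine dobrushin_le _ _ fun i j => ?_
  set v : C → ℝ := fun c => Q2 c i - Q2 c j with hv
  have hv0 : ∑ c, v c = 0 := by
    rw [Finset.sum_sub_distrib, h2.2 i, h2.2 j]; ring
  have hentry : ∀ k : B, (Q1 * Q2) k i - (Q1 * Q2) k j = ∑ c, Q1 k c * v c := by
    intro k
    rw [Matrix.mul_apply, Matrix.mul_apply, ← Finset.sum_sub_distrib]
    exact Finset.sum_congr rfl fun c _ => by rw [hv]; ring
  calc (1 / 2) * ∑ k : B, |(Q1 * Q2) k i - (Q1 * Q2) k j|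
      = (1 / 2) * ∑ k : B, |∑ c, Q1 k c * v c| := by
        congr 1; exact Finset.sum_congr rfl fun k _ => by rw [hentry k]
    _ ≤ dobrushin Q1 * ((1 / 2) * ∑ c, |v c|) :=
        key_contraction Q1 v hv0 _ (le_dobrushin Q1)
    _ ≤ dobrushin Q1 * dobrushin Q2 := by
        refine mul_le_mul_of_nonneg_left ?_ (dobrushin_nonneg Q1)
        exact le_dobrushin Q2 i j
end
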